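/- Let n ∈ ℕ and let E₁, …, Eₙ and F be Banach spaces over ℂ. The collection of weakly compact bounded n-linear maps from E₁ × ⋯ × Eₙ to F is a closed linear subspace of the Banach space of all bounded n-linear maps from E₁ × ⋯ × Eₙ to F with the operator norm: it contains 0, is closed under addition and scalar multiplication, and is closed in the operator norm topology. -/

import Mathlib

/-- A bounded `n`-linear map `T` into a Banach space `F` is *weakly compact* if the closure,
in the weak topology of `F`, of the image under `T` of the product of the open unit balls is
weakly compact. -/
def IsWeaklyCompactMultilinearMap {n : ℕ} {E : Fin n → Type*} {F : Type*}
    [∀ i, NormedAddCommGroup (E i)] [∀ i, NormedSpace ℂ (E i)]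
    [NormedAddCommGroup F] [NormedSpace ℂ F]
    (T : ContinuousMultilinearMap ℂ E F) : Prop :=
  IsCompact (closure ((toWeakSpace ℂ F) '' (⇑T '' {x : ∀ i, E i | ∀ i, ‖x i‖ < 1})))



open NormedSpace Topology Set Pointwise

noncomputable section AuxWC

variable {F : Type*} [NormedAddCommGroup F] [NormedSpace ℂ F]

/-- The canonical map from `F` with weak topology into the double dual with weak-star topology. -/
def weakToBidual (F : Type*) [NormedAddCommGroup F] [NormedSpace ℂ F] :
    WeakSpace ℂ F → WeakDual ℂ (StrongDual ℂ F) :=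
  fun x => StrongDual.toWeakDual
    (NormedSpace.inclusionInDoubleDual ℂ F ((toWeakSpace ℂ F).symm x))

lemma weakToBidual_continuous : Continuous (weakToBidual F) := by
  apply WeakDual.continuous_of_continuous_eval
  intro y
  exact WeakBilin.eval_continuous ((topDualPairing ℂ F).flip) y

lemma weakToBidual_inducing : Topology.IsInducing (weakToBidual F) := by
  have h2 : Topology.IsInducing
      (fun (g : WeakDual ℂ (StrongDual ℂ F)) (y : StrongDual ℂ F) => g y) :=
    (WeakBilin.isEmbedding (B := topDualPairing ℂ (StrongDual ℂ F))
      ContinuousLinearMap.coe_injective).toIsInducing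
  have h1 : Topology.IsInducing
      (fun (x : WeakSpace ℂ F) (y : StrongDual ℂ F) => ((topDualPairing ℂ F).flip) x y) :=
    ⟨rfl⟩
  exact Topology.IsInducing.of_comp weakToBidual_continuous h2.continuous h1

lemma weakToBidual_injective : Function.Injective (weakToBidual F) := by
  intro x y h
  have : NormedSpace.inclusionInDoubleDual ℂ F ((toWeakSpace ℂ F).symm x)
      = NormedSpace.inclusionInDoubleDual ℂ F ((toWeakSpace ℂ F).symm y) := h
  apply (toWeakSpace ℂ F).symm.injective
  rw [NormedSpace.eq_iff_forall_dual_eq ℂ]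
  intro g
  exact DFunLike.congr_fun this g

lemma weakSpace_t2 : T2Space (WeakSpace ℂ F) :=
  Topology.IsEmbedding.t2Space ⟨weakToBidual_inducing, weakToBidual_injective⟩

end AuxWC

section Key

variable {F : Type*} [NormedAddCommGroup F] [NormedSpace ℂ F]

lemma weakToBidual_norm (a : F) :
    ‖WeakDual.toStrongDual (weakToBidual F (toWeakSpace ℂ F a))‖ ≤ ‖a‖ := by
  exact NormedSpace.double_dual_bound ℂ F a

/-- If the weak-star closure of the image in the bidual lands in the range of the canonical
embedding, and the set is bounded, then the weak closure is weakly compact. -/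
lemma key_compact {A : Set F} {M : ℝ} (hA : ∀ a ∈ A, ‖a‖ ≤ M)
    (h : closure (weakToBidual F '' (toWeakSpace ℂ F '' A)) ⊆ Set.range (weakToBidual F)) :
    IsCompact (closure (toWeakSpace ℂ F '' A)) := by
  have hball : IsCompact (WeakDual.toStrongDual ⁻¹' Metric.closedBall 0 M) :=
    WeakDual.isCompact_closedBall (𝕜 := ℂ) (E := StrongDual ℂ F) 0 M
  have hsub : weakToBidual F '' (toWeakSpace ℂ F '' A) ⊆
      WeakDual.toStrongDual ⁻¹' Metric.closedBall 0 M := by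
    rintro _ ⟨_, ⟨a, ha, rfl⟩, rfl⟩
    simp only [Set.mem_preimage, Metric.mem_closedBall, dist_zero_right]
    exact (le_of_eq (dist_zero_right (WeakDual.toStrongDual (weakToBidual F ((toWeakSpace ℂ F) a))))).trans ((weakToBidual_norm a).trans (hA a ha))
  have hC : IsCompact (closure (weakToBidual F '' (toWeakSpace ℂ F '' A))) :=
    hball.of_isClosed_subset isClosed_closure (closure_minimal hsub hball.isClosed)
  have hpre : IsCompact (weakToBidual F ⁻¹' closure (weakToBidual F '' (toWeakSpace ℂ F '' A))) :=
    weakToBidual_inducing.isCompact_preimage' hC h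
  refine hpre.of_isClosed_subset isClosed_closure (closure_minimal ?_
    (isClosed_closure.preimage weakToBidual_continuous))
  exact fun x hx => subset_closure (Set.mem_image_of_mem _ hx)

/-- Conversely, if the weak closure is compact, the weak-star closure of the image in the bidual
is contained in the image of that compact set (in particular in the range). -/
lemma key_range {A : Set (WeakSpace ℂ F)} (h : IsCompact (closure A)) :
    closure (weakToBidual F '' A) ⊆ weakToBidual F '' closure A := by
  have hc : IsCompact (weakToBidual F '' closure A) := h.image weakToBidual_continuous
  exact closure_minimal (Set.image_mono subset_closure) hc.isClosed

end Key

instance (F : Type*) [NormedAddCommGroup F] [NormedSpace ℂ F] : T2Space (WeakSpace ℂ F) :=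
  weakSpace_t2

instance (F : Type*) [NormedAddCommGroup F] [NormedSpace ℂ F] :
    ContinuousSMul ℂ (WeakSpace ℂ F) :=
  WeakBilin.instContinuousSMul (topDualPairing ℂ F).flip


/-- the weakly compact bounded `n`-linear maps from `E₁ × ⋯ × Eₙ` to `F` form a
closed linear subspace of the Banach space of bounded `n`-linear maps: they contain `0`, are
closed under addition and scalar multiplication, and form a closed set in the operator norm. -/
theorem isWeaklyCompactMultilinearMap_closed_subspace (n : ℕ) (E : Fin n → Type*)
    [∀ i, NormedAddCommGroup (E i)] [∀ i, NormedSpace ℂ (E i)] [∀ i, CompleteSpace (E i)]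
    (F : Type*) [NormedAddCommGroup F] [NormedSpace ℂ F] [CompleteSpace F] :
    IsWeaklyCompactMultilinearMap (0 : ContinuousMultilinearMap ℂ E F) ∧
    (∀ T S : ContinuousMultilinearMap ℂ E F,
      IsWeaklyCompactMultilinearMap T → IsWeaklyCompactMultilinearMap S →
        IsWeaklyCompactMultilinearMap (T + S)) ∧
    (∀ (c : ℂ) (T : ContinuousMultilinearMap ℂ E F),
      IsWeaklyCompactMultilinearMap T → IsWeaklyCompactMultilinearMap (c • T)) ∧
    IsClosed {T : ContinuousMultilinearMap ℂ E F | IsWeaklyCompactMultilinearMap T} := by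
  set ball : Set (∀ i, E i) := {x : ∀ i, E i | ∀ i, ‖x i‖ < 1} with hball_def
  have hball_ne : ball.Nonempty := ⟨0, fun i => by simp⟩
  have hprod : ∀ x ∈ ball, ∏ i, ‖x i‖ ≤ 1 := by
    intro x hx
    exact Finset.prod_le_one (fun i _ => norm_nonneg _) (fun i _ => (hx i).le)
  refine ⟨?_, ?_, ?_, ?_⟩
  · -- zero
    unfold IsWeaklyCompactMultilinearMap
    have himg : ⇑(0 : ContinuousMultilinearMap ℂ E F) '' ball = {0} := by
      rw [show ⇑(0 : ContinuousMultilinearMap ℂ E F) = fun _ => (0 : F) from rfl]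
      exact hball_ne.image_const 0
    rw [himg, Set.image_singleton, map_zero, closure_singleton]
    exact isCompact_singleton
  · -- add
    intro T S hT hS
    unfold IsWeaklyCompactMultilinearMap at hT hS ⊢
    have hK : IsCompact (closure ((toWeakSpace ℂ F) '' (⇑T '' ball)) +
        closure ((toWeakSpace ℂ F) '' (⇑S '' ball))) := hT.add hS
    refine hK.of_isClosed_subset isClosed_closure (closure_minimal ?_ hK.isClosed)
    rintro _ ⟨_, ⟨x, hx, rfl⟩, rfl⟩
    have : (toWeakSpace ℂ F) ((T + S) x) = toWeakSpace ℂ F (T x) + toWeakSpace ℂ F (S x) := by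
      rw [ContinuousMultilinearMap.add_apply, map_add]
    rw [this]
    exact Set.add_mem_add
      (subset_closure (Set.mem_image_of_mem _ (Set.mem_image_of_mem _ hx)))
      (subset_closure (Set.mem_image_of_mem _ (Set.mem_image_of_mem _ hx)))
  · -- smul
    intro c T hT
    unfold IsWeaklyCompactMultilinearMap at hT ⊢
    have hK : IsCompact (c • closure ((toWeakSpace ℂ F) '' (⇑T '' ball))) := hT.smul c
    refine hK.of_isClosed_subset isClosed_closure (closure_minimal ?_ hK.isClosed)
    rintro _ ⟨_, ⟨x, hx, rfl⟩, rfl⟩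
    have : (toWeakSpace ℂ F) ((c • T) x) = c • toWeakSpace ℂ F (T x) := by
      rw [ContinuousMultilinearMap.smul_apply, map_smul]
    rw [this]
    exact Set.smul_mem_smul_set
      (subset_closure (Set.mem_image_of_mem _ (Set.mem_image_of_mem _ hx)))
  · -- closed
    refine isClosed_of_closure_subset ?_
    intro T hTcl
    show IsCompact (closure ((toWeakSpace ℂ F) '' (⇑T '' ball)))
    refine key_compact (M := ‖T‖) ?_ ?_
    · rintro _ ⟨x, hx, rfl⟩
      calc ‖T x‖ ≤ ‖T‖ * ∏ i, ‖x i‖ := T.le_opNorm x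
        _ ≤ ‖T‖ * 1 := by
            exact mul_le_mul_of_nonneg_left (hprod x hx) (norm_nonneg T)
        _ = ‖T‖ := mul_one _
    · -- the weak-star closure of the image lands in the range of the embedding
      intro xdd hxdd
      -- reduce to a statement about the normed bidual
      have hJclosed : IsClosed (Set.range ⇑(NormedSpace.inclusionInDoubleDual ℂ F)) := by
        have h1 : Isometry ⇑(NormedSpace.inclusionInDoubleDualLi ℂ (E := F)) :=
          (NormedSpace.inclusionInDoubleDualLi ℂ (E := F)).isometry
        have h2 := h1.isClosedEmbedding.isClosed_range
        exact h2
      have hmem : WeakDual.toStrongDual xdd ∈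
          Set.range ⇑(NormedSpace.inclusionInDoubleDual ℂ F) := by
        rw [← hJclosed.closure_eq]; refine (Metric.mem_closure_iff (α := StrongDual ℂ (StrongDual ℂ F))).2 ?_
        intro ε hε
        -- choose a weakly compact S close to T
        obtain ⟨S, hSW, hTS⟩ := Metric.mem_closure_iff.1 hTcl (ε / 2) (by positivity)
        have hS : IsCompact (closure ((toWeakSpace ℂ F) '' (⇑S '' ball))) := hSW
        set K := closure ((toWeakSpace ℂ F) '' (⇑S '' ball)) with hK_def
        have hD : IsCompact (weakToBidual F '' K) := hS.image weakToBidual_continuous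
        have hB : IsCompact (WeakDual.toStrongDual ⁻¹' Metric.closedBall 0 (ε / 2)) :=
          WeakDual.isCompact_closedBall (𝕜 := ℂ) (E := StrongDual ℂ F) 0 (ε / 2)
        have hDB : IsCompact (weakToBidual F '' K +
            WeakDual.toStrongDual ⁻¹' Metric.closedBall 0 (ε / 2)) := hD.add hB
        have hsub : weakToBidual F '' ((toWeakSpace ℂ F) '' (⇑T '' ball)) ⊆
            weakToBidual F '' K + WeakDual.toStrongDual ⁻¹' Metric.closedBall 0 (ε / 2) := by
          rintro _ ⟨_, ⟨_, ⟨x, hx, rfl⟩, rfl⟩, rfl⟩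
          have h1 : weakToBidual F (toWeakSpace ℂ F (S x)) ∈ weakToBidual F '' K :=
            Set.mem_image_of_mem _
              (subset_closure (Set.mem_image_of_mem _ (Set.mem_image_of_mem _ hx)))
          have heq : weakToBidual F (toWeakSpace ℂ F (T x)) =
              weakToBidual F (toWeakSpace ℂ F (S x)) +
              (weakToBidual F (toWeakSpace ℂ F (T x)) -
                weakToBidual F (toWeakSpace ℂ F (S x))) := (add_sub_cancel _ _).symm
          rw [heq]
          refine Set.add_mem_add h1 ?_
          simp only [Set.mem_preimage, Metric.mem_closedBall, dist_zero_right]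
          have hz : WeakDual.toStrongDual (weakToBidual F (toWeakSpace ℂ F (T x)) -
              weakToBidual F (toWeakSpace ℂ F (S x))) =
              NormedSpace.inclusionInDoubleDual ℂ F (T x - S x) := by
            rw [map_sub, map_sub]
            rfl
          rw [hz]
          have h3 : ‖T x - S x‖ ≤ ε / 2 := by
            have h4 : ‖(T - S) x‖ ≤ ‖T - S‖ * ∏ i, ‖x i‖ := (T - S).le_opNorm x
            rw [ContinuousMultilinearMap.sub_apply] at h4
            have h5 : ‖T - S‖ * ∏ i, ‖x i‖ ≤ ‖T - S‖ * 1 :=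
              mul_le_mul_of_nonneg_left (hprod x hx) (norm_nonneg _)
            have h6 : ‖T - S‖ ≤ ε / 2 := by
              rw [dist_eq_norm] at hTS
              exact hTS.le
            calc ‖T x - S x‖ ≤ ‖T - S‖ * ∏ i, ‖x i‖ := h4
              _ ≤ ‖T - S‖ := by simpa using h5
              _ ≤ ε / 2 := h6
          exact (le_of_eq (dist_zero_right (NormedSpace.inclusionInDoubleDual ℂ F (T x - S x)))).trans ((NormedSpace.double_dual_bound ℂ F (T x - S x)).trans h3)
        have hxin : xdd ∈ weakToBidual F '' K +
            WeakDual.toStrongDual ⁻¹' Metric.closedBall 0 (ε / 2) :=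
          closure_minimal hsub hDB.isClosed hxdd
        obtain ⟨d, hd, b, hb, rfl⟩ := Set.mem_add.1 hxin
        obtain ⟨k, hk, rfl⟩ := hd
        refine ⟨NormedSpace.inclusionInDoubleDual ℂ F ((toWeakSpace ℂ F).symm k),
          Set.mem_range_self _, ?_⟩
        have hdk : WeakDual.toStrongDual (weakToBidual F k) =
            NormedSpace.inclusionInDoubleDual ℂ F ((toWeakSpace ℂ F).symm k) := rfl
        refine (dist_eq_norm (WeakDual.toStrongDual (weakToBidual F k + b)) (NormedSpace.inclusionInDoubleDual ℂ F ((toWeakSpace ℂ F).symm k))).trans_lt ?_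
        have : WeakDual.toStrongDual (weakToBidual F k + b) -
            NormedSpace.inclusionInDoubleDual ℂ F ((toWeakSpace ℂ F).symm k) =
            WeakDual.toStrongDual b := by
          rw [map_add, hdk]
          abel
        rw [this]
        simp only [Set.mem_preimage, Metric.mem_closedBall, dist_zero_right] at hb
        linarith [(dist_zero_right (WeakDual.toStrongDual b)).symm.trans_le hb]
      obtain ⟨y, hy⟩ := hmem
      exact ⟨toWeakSpace ℂ F y, hy⟩
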